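/- Let q ≥ 3 and n ≥ 3. For every w ∈ A_q(n) and every w' ∈ A_q(n) ∪ B_q(n), no nonempty proper prefix of w is equal to a suffix of w'. -/

import Mathlib

/-- Value of a letter: 1 ↦ +1, 0 ↦ -1, other letters ↦ 0. -/
def mval (a : ℕ) : ℤ := if a = 1 then 1 else if a = 0 then -1 else 0

/-- Value-sum of a word. -/
def vsum (w : List ℕ) : ℤ := (w.map mval).sum

/-- A (q-2)-colored Motzkin word over the alphabet Z_q = {0,...,q-1}:
all letters < q, every prefix has nonnegative value-sum, total value-sum 0. -/
def IsMotzkinWord (q : ℕ) (w : List ℕ) : Prop :=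
  (∀ a ∈ w, a < q) ∧ (∀ u, u <+: w → 0 ≤ vsum u) ∧ vsum w = 0

/-- The set 𝓜_{q-2}(n) of (q-2)-colored Motzkin words of length n. -/
def MotzkinSet (q n : ℕ) : Set (List ℕ) := {w | w.length = n ∧ IsMotzkinWord q w}

/-- M_{q-2}(n), the number of (q-2)-colored Motzkin words of length n. -/
noncomputable def Mnum (q n : ℕ) : ℕ := (MotzkinSet q n).ncard

/-- The set Ê_{q-2}(n) of elevated (q-2)-colored Motzkin words of length n:
words 1α0 with α ∈ 𝓜_{q-2}(n-2). -/
def ElevatedSet (q n : ℕ) : Set (List ℕ) :=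
  {w | w.length = n ∧ ∃ α ∈ MotzkinSet q (n - 2), w = 1 :: (α ++ [0])}

/-- The set A_q(n). -/
def SetA (q n : ℕ) : Set (List ℕ) :=
  {w | ∃ i ≤ n / 2, ∃ α ∈ MotzkinSet q i, ∃ β ∈ ElevatedSet q (n - i), w = α ++ β} \
    {w | ∃ α ∈ ElevatedSet q (n / 2), ∃ β ∈ ElevatedSet q (n / 2), w = α ++ β}

/-- The set B_q(n). -/
def SetB (q n : ℕ) : Set (List ℕ) :=
  {w | ∃ i ≤ n / 2 - 1, ∃ α ∈ MotzkinSet q i, ∃ β ∈ ElevatedSet q (n - i - 1),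
    w = 1 :: (α ++ β)}

/-- The set C_q(n): words γ0 with γ a (q-2)-colored Motzkin word of length n-1
having no factor which is an elevated Motzkin word of length j ≥ ⌈n/2⌉. -/
def SetC (q n : ℕ) : Set (List ℕ) :=
  {w | ∃ γ ∈ MotzkinSet q (n - 1),
    (∀ j, (n + 1) / 2 ≤ j → ∀ β ∈ ElevatedSet q j, ¬ β <:+: γ) ∧ w = γ ++ [0]}

/-- The cross-bifix-free candidate set CBFS_q(n). -/
def CBFS (q n : ℕ) : Set (List ℕ) := SetA q n ∪ SetB q n ∪ SetC q n

/-- A word is bifix-free if no nonempty proper prefix of it is also a suffix of it. -/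
def BifixFree (w : List ℕ) : Prop :=
  ∀ u, u <+: w → u ≠ [] → u.length < w.length → ¬ u <:+ w

/-- BF_q(n): the set of bifix-free words of length n over Z_q. -/
def BF (q n : ℕ) : Set (List ℕ) := {w | w.length = n ∧ (∀ a ∈ w, a < q) ∧ BifixFree w}

/-- F_{k,q}(n): the number of words of length n over Z_q avoiding k consecutive 0's. -/
noncomputable def Fcount (k q n : ℕ) : ℕ :=
  {w : List ℕ | w.length = n ∧ (∀ a ∈ w, a < q) ∧ ¬ List.replicate k 0 <:+: w}.ncard

/-- The set S_{k,q}(n) of Bajic--Stojanovic--Chee--Kiah type words: words s of length n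
over Z_q with s₁ = ⋯ = s_k = 0, s_{k+1} ≠ 0, s_n ≠ 0, and such that the subword
s_{k+2} ⋯ s_{n-1} contains no k consecutive 0's. -/
def SetS (q k n : ℕ) : Set (List ℕ) :=
  {s | s.length = n ∧ (∀ a ∈ s, a < q) ∧ s.take k = List.replicate k 0 ∧
    s.getD k 0 ≠ 0 ∧ s.getLast? ≠ some 0 ∧
    ¬ List.replicate k 0 <:+: (s.drop (k + 1)).take (n - k - 2)}

lemma vsum_append (a b : List ℕ) : vsum (a ++ b) = vsum a + vsum b := by
  simp [vsum]

lemma vsum_cons (x : ℕ) (a : List ℕ) : vsum (x :: a) = mval x + vsum a := by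
  simp [vsum]

lemma prefix_append_cases {u a b : List ℕ} (h : u <+: (a ++ b)) :
    u <+: a ∨ ∃ v, v <+: b ∧ u = a ++ v := by
  obtain ⟨t, ht⟩ := h
  rcases List.append_eq_append_iff.mp ht with ⟨k, hk, _⟩ | ⟨k, hk, hk'⟩
  · exact Or.inl ⟨k, hk.symm⟩
  · exact Or.inr ⟨k, ⟨t, hk'.symm⟩, hk⟩

lemma prefix_cons_cases {u : List ℕ} {x : ℕ} {l : List ℕ} (h : u <+: x :: l) :
    u = [] ∨ ∃ v, v <+: l ∧ u = x :: v := by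
  cases u with
  | nil => exact Or.inl rfl
  | cons y ys =>
    rw [List.cons_prefix_cons] at h
    exact Or.inr ⟨ys, h.2, by rw [h.1]⟩

lemma prefix_elevated_nonneg {γ u : List ℕ}
    (hγpre : ∀ v, v <+: γ → 0 ≤ vsum v) (hγ : vsum γ = 0)
    (hu : u <+: 1 :: (γ ++ [0])) : 0 ≤ vsum u := by
  rcases prefix_cons_cases hu with rfl | ⟨v, hv, rfl⟩
  · simp [vsum]
  · rcases prefix_append_cases hv with hv' | ⟨s, hs, rfl⟩
    · have := hγpre v hv'
      rw [vsum_cons]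
      norm_num [mval]
      linarith
    · rcases prefix_cons_cases hs with rfl | ⟨t, ht, rfl⟩
      · rw [vsum_cons, List.append_nil, hγ]
        simp [mval]
      · have : t = [] := List.prefix_nil.mp ht
        subst this
        rw [vsum_cons, vsum_append, hγ]
        simp [vsum, mval]

/-- Classification of prefixes with value-sum 0 of a word of the form α·1γ0. -/
lemma prefix_vsum_zero {α γ u : List ℕ}
    (hα : vsum α = 0)
    (hγpre : ∀ v, v <+: γ → 0 ≤ vsum v)
    (hu : u <+: α ++ 1 :: (γ ++ [0])) (h0 : vsum u = 0) :
    u <+: α ∨ u = α ++ 1 :: (γ ++ [0]) := by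
  rcases prefix_append_cases hu with h | ⟨v, hv, rfl⟩
  · exact Or.inl h
  · rcases prefix_cons_cases hv with rfl | ⟨v', hv', rfl⟩
    · exact Or.inl (by simp)
    · rcases prefix_append_cases hv' with h' | ⟨s, hs, rfl⟩
      · exfalso
        have := hγpre v' h'
        rw [vsum_append, vsum_cons, hα] at h0
        norm_num [mval] at h0
        linarith
      · rcases prefix_cons_cases hs with rfl | ⟨t, ht, rfl⟩
        · exfalso
          have hγ0 : 0 ≤ vsum γ := hγpre γ List.prefix_rfl
          rw [vsum_append, vsum_cons, List.append_nil, hα] at h0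
          norm_num [mval] at h0
          linarith
        · have : t = [] := List.prefix_nil.mp ht
          subst this
          exact Or.inr rfl

lemma motzkin_append {q i j : ℕ} {a b : List ℕ} (ha : a ∈ MotzkinSet q i)
    (hb : b ∈ MotzkinSet q j) : a ++ b ∈ MotzkinSet q (i + j) := by
  refine ⟨by simp [ha.1, hb.1], ?_, ?_, ?_⟩
  · intro x hx
    rcases List.mem_append.mp hx with h | h
    exacts [ha.2.1 x h, hb.2.1 x h]
  · intro u hu
    rcases prefix_append_cases hu with h | ⟨v, hv, rfl⟩
    · exact ha.2.2.1 u h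
    · rw [vsum_append, ha.2.2.2]
      have := hb.2.2.1 v hv
      linarith
  · rw [vsum_append, ha.2.2.2, hb.2.2.2]
    ring

lemma elevated_motzkin {q m : ℕ} (hq : 3 ≤ q) {β : List ℕ}
    (h : β ∈ ElevatedSet q m) : β ∈ MotzkinSet q m := by
  obtain ⟨hl, γ, hγ, rfl⟩ := h
  refine ⟨hl, ?_, ?_, ?_⟩
  · intro x hx
    simp only [List.mem_cons, List.mem_append, List.mem_singleton] at hx
    rcases hx with rfl | hx | rfl | h
    · omega
    · exact hγ.2.1 x hx
    · omega
    · exact absurd h List.not_mem_nil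
  · exact fun u hu => prefix_elevated_nonneg hγ.2.2.1 hγ.2.2.2 hu
  · rw [vsum_cons, vsum_append, hγ.2.2.2]
    simp [vsum, mval]

/-- For w ∈ A_q(n) and w' ∈ A_q(n) ∪ B_q(n), no nonempty proper prefix of
w equals a suffix of w'. -/
theorem setA_vs_setAB_no_cross_bifix (q n : ℕ) (hq : 3 ≤ q) (hn : 3 ≤ n)
    (w w' : List ℕ) (hw : w ∈ SetA q n) (hw' : w' ∈ SetA q n ∪ SetB q n) :
    ∀ u, u <+: w → u ≠ [] → u.length < w.length → ¬ u <:+ w' := by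
  intro u hupre hune hulen husuf
  obtain ⟨⟨i, hi, α, hα, β, hβ, rfl⟩, hnot⟩ := hw
  obtain ⟨hβl, γ, hγ, rfl⟩ := hβ
  have hαl := hα.1
  have hγl := hγ.1
  simp only [List.length_cons, List.length_append, List.length_singleton] at hβl
  -- w is a Motzkin word
  have hβm : (1 :: (γ ++ [0])) ∈ MotzkinSet q (n - i) :=
    elevated_motzkin hq ⟨by simp; omega, γ, hγ, rfl⟩
  have hwm := motzkin_append hα hβm
  have hwlen : (α ++ 1 :: (γ ++ [0])).length = n := by simp [hαl]; omega
  have hu0 : 0 ≤ vsum u := hwm.2.2.1 u hupre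
  have hulen' : u.length < n := by rwa [hwlen] at hulen
  -- helper: once we know vsum u = 0, u is a prefix of α
  have key : vsum u = 0 → u <+: α := by
    intro h0
    rcases prefix_vsum_zero hα.2.2.2 hγ.2.2.1 hupre h0 with h | h
    · exact h
    · exfalso; rw [h] at hulen; exact lt_irrefl _ hulen
  -- helper: the final contradiction, given u equals an elevated word of half length
  have final : ∀ γ' : List ℕ, γ' ∈ MotzkinSet q (n / 2 - 2) →
      u = 1 :: (γ' ++ [0]) → u <+: α → u.length = n / 2 → i = n / 2 →
      2 * (n / 2) = n → False := by
    intro γ' hγ' huel hua hul hieq heven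
    have hαu : u = α := List.IsPrefix.eq_of_length hua (by omega)
    refine hnot ⟨α, ⟨by omega, γ', hγ', by rw [← hαu, huel]⟩,
      1 :: (γ ++ [0]), ⟨by simp; omega, γ, ?_, rfl⟩, rfl⟩
    have : n - i - 2 = n / 2 - 2 := by omega
    rwa [this] at hγ
  rcases hw' with hw'A | hw'B
  · -- w' ∈ A
    obtain ⟨⟨i', hi', α', hα', β', hβ', rfl⟩, -⟩ := hw'A
    obtain ⟨hβ'l, γ', hγ', rfl⟩ := hβ'
    have hα'l := hα'.1
    have hγ'l := hγ'.1
    simp only [List.length_cons, List.length_append, List.length_singleton] at hβ'l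
    have hβ'm : (1 :: (γ' ++ [0])) ∈ MotzkinSet q (n - i') :=
      elevated_motzkin hq ⟨by simp; omega, γ', hγ', rfl⟩
    have hw'm := motzkin_append hα' hβ'm
    obtain ⟨p, hp⟩ := husuf
    have hlen2 := congrArg List.length hp
    simp only [List.length_append, List.length_cons, List.length_singleton] at hlen2
    have hp0 : 0 ≤ vsum p := hw'm.2.2.1 p ⟨u, hp⟩
    have hsum : vsum p + vsum u = 0 := by
      have h := hw'm.2.2.2
      rw [← hp, vsum_append] at h
      exact h
    have h0u : vsum u = 0 := by linarith
    have h0p : vsum p = 0 := by linarith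
    have hua := key h0u
    have hulα : u.length ≤ α.length := hua.length_le
    rcases prefix_vsum_zero hα'.2.2.2 hγ'.2.2.1 ⟨u, hp⟩ h0p with hpα' | hpw'
    · have hplα' : p.length ≤ α'.length := hpα'.length_le
      have hul : u.length = n / 2 := by omega
      have hieq : i = n / 2 := by omega
      have hpl : p.length = α'.length := by omega
      have hpe : p = α' := List.IsPrefix.eq_of_length hpα' hpl
      rw [hpe] at hp
      have hue : u = 1 :: (γ' ++ [0]) := List.append_cancel_left hp
      have : n - i' - 2 = n / 2 - 2 := by omega
      rw [this] at hγ'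
      exact final γ' hγ' hue hua hul hieq (by omega)
    · exfalso
      have := congrArg List.length hpw'
      simp only [List.length_append, List.length_cons, List.length_singleton] at this
      have : u.length = 0 := by omega
      exact hune (List.length_eq_zero_iff.mp this)
  · -- w' ∈ B
    obtain ⟨i', hi', α', hα', β', hβ', hw'e⟩ := hw'B
    obtain ⟨hβ'l, γ', hγ', rfl⟩ := hβ'
    have hα'l := hα'.1
    have hγ'l := hγ'.1
    simp only [List.length_cons, List.length_append, List.length_singleton] at hβ'l
    have hβ'm : (1 :: (γ' ++ [0])) ∈ MotzkinSet q (n - i' - 1) :=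
      elevated_motzkin hq ⟨by simp; omega, γ', hγ', rfl⟩
    have hcm := motzkin_append hα' hβ'm
    obtain ⟨p, hp⟩ := husuf
    rw [hw'e] at hp
    cases p with
    | nil =>
      simp only [List.nil_append] at hp
      have := congrArg List.length hp
      simp only [List.length_cons, List.length_append, List.length_singleton] at this
      omega
    | cons x ρ =>
      simp only [List.cons_append, List.cons.injEq] at hp
      obtain ⟨rfl, hρ⟩ := hp
      have hρ0 : 0 ≤ vsum ρ := hcm.2.2.1 ρ ⟨u, hρ⟩
      have hsum : vsum ρ + vsum u = 0 := by
        have h := hcm.2.2.2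
        rw [← hρ, vsum_append] at h
        exact h
      have h0u : vsum u = 0 := by linarith
      have h0ρ : vsum ρ = 0 := by linarith
      have hua := key h0u
      have hulα : u.length ≤ α.length := hua.length_le
      have hlen2 := congrArg List.length hρ
      simp only [List.length_append, List.length_cons, List.length_singleton] at hlen2
      rcases prefix_vsum_zero hα'.2.2.2 hγ'.2.2.1 ⟨u, hρ⟩ h0ρ with hρα' | hρw'
      · have hplα' : ρ.length ≤ α'.length := hρα'.length_le
        have hul : u.length = n / 2 := by omega
        have hieq : i = n / 2 := by omega
        have hpl : ρ.length = α'.length := by omega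
        have hpe : ρ = α' := List.IsPrefix.eq_of_length hρα' hpl
        rw [hpe] at hρ
        have hue : u = 1 :: (γ' ++ [0]) := List.append_cancel_left hρ
        have : n - i' - 1 - 2 = n / 2 - 2 := by omega
        rw [this] at hγ'
        exact final γ' hγ' hue hua hul hieq (by omega)
      · exfalso
        have := congrArg List.length hρw'
        simp only [List.length_append, List.length_cons, List.length_singleton] at this
        have : u.length = 0 := by omega
        exact hune (List.length_eq_zero_iff.mp this)
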